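/- Let f : ℝ^d → ℝ be continuously differentiable with ∇f Lipschitz continuous with constant L > 0. Let ε_f ≥ 0, r ≥ 2 with L ≥ r ε_f, Δ_max > 0, 0 < Δ ≤ Δ_max, and θ ∈ ℝ^d. Define the sampling radius Δ̄ = max{Δ, √(r ε_f / L)}. Let 𝒳 = {x^0 = θ, x^1, …, x^p} ⊂ B(θ, Δ̄) be poised in the minimum Frobenius norm sense and Λ̄-poised in B(θ, Δ̄) in the minimum Frobenius norm sense for some Λ̄ > 0. Let f̃(x^0), …, f̃(x^p) ∈ ℝ satisfy |f̃(x^i) − f(x^i)| ≤ ε_f for every i, and let m be the MFN interpolation model with data (f̃(x^0), …, f̃(x^p)). Set A = 4(p+1)Λ̄ L √((d+1)(d+2)) and B = 8(p+1)Λ̄ √((d+1)(d+2)). Then the model gradient g = ∇m(θ) satisfies ‖∇f(θ) − g‖ ≤ ε_g + κ_eg Δ, where κ_eg = (p+1)Λ̄ (L + max{A, B ε_f}) and ε_g = (p+1)Λ̄ · max{ (L + A)√(r ε_f / L) + (B + 2)√(L ε_f / r), A Δ_max³ + 2√(L ε_f / r) }. -/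

import Mathlib

noncomputable section

open scoped RealInnerProductSpace
open Matrix

/-- Index type for the degree-two monomials `x_i x_j` with `i ≤ j`;
it has cardinality `d(d+1)/2`. -/
abbrev QIdx (d : ℕ) := {ij : Fin d × Fin d // ij.1 ≤ ij.2}

/-- The vector `μ(y) = (1, y_1, …, y_d)` of degree-zero and degree-one monomials. -/
def muVec {d : ℕ} (y : EuclideanSpace ℝ (Fin d)) : Fin (d + 1) → ℝ :=
  Fin.cons 1 fun j => y j

/-- The vector `ν(y)` of degree-two monomials `y_i y_j`, `i ≤ j`. -/
def nuVec {d : ℕ} (y : EuclideanSpace ℝ (Fin d)) : QIdx d → ℝ :=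
  fun ij => y ij.1.1 * y ij.1.2

/-- The matrix `M` with `M_{ij} = μ_i(x^j)`. -/
def Mmat {d p : ℕ} (x : Fin (p + 1) → EuclideanSpace ℝ (Fin d)) :
    Matrix (Fin (d + 1)) (Fin (p + 1)) ℝ :=
  Matrix.of fun i j => muVec (x j) i

/-- The matrix `N` with `N_{ij} = ν_i(x^j)`. -/
def Nmat {d p : ℕ} (x : Fin (p + 1) → EuclideanSpace ℝ (Fin d)) :
    Matrix (QIdx d) (Fin (p + 1)) ℝ :=
  Matrix.of fun i j => nuVec (x j) i

/-- The KKT matrix `W = [[NᵀN, Mᵀ], [M, 0]]`. -/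
def Wmat {d p : ℕ} (x : Fin (p + 1) → EuclideanSpace ℝ (Fin d)) :
    Matrix (Fin (p + 1) ⊕ Fin (d + 1)) (Fin (p + 1) ⊕ Fin (d + 1)) ℝ :=
  Matrix.fromBlocks ((Nmat x)ᵀ * Nmat x) (Mmat x)ᵀ (Mmat x) 0

/-- `𝒳` is poised in the minimum Frobenius norm sense: the KKT matrix `W` is nonsingular. -/
def MFNPoised {d p : ℕ} (x : Fin (p + 1) → EuclideanSpace ℝ (Fin d)) : Prop :=
  IsUnit (Wmat x).det

/-- The quadratic polynomial `m(y) = αᵀμ(y) + βᵀν(y)` with coefficients `(α, β)`. -/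
def modelFun {d : ℕ} (a : Fin (d + 1) → ℝ) (b : QIdx d → ℝ)
    (y : EuclideanSpace ℝ (Fin d)) : ℝ :=
  (∑ i, a i * muVec y i) + ∑ ij, b ij * nuVec y ij

/-- `(α, β)` solves the minimum Frobenius norm interpolation problem for the data `v`:
it satisfies the interpolation constraints `Mᵀα + Nᵀβ = v` and minimizes `(1/2)‖β‖²`
among all coefficient pairs satisfying the constraints. -/
def IsMFNSol {d p : ℕ} (x : Fin (p + 1) → EuclideanSpace ℝ (Fin d))
    (v : Fin (p + 1) → ℝ) (a : Fin (d + 1) → ℝ) (b : QIdx d → ℝ) : Prop :=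
  (Mmat x)ᵀ.mulVec a + (Nmat x)ᵀ.mulVec b = v ∧
    ∀ (a' : Fin (d + 1) → ℝ) (b' : QIdx d → ℝ),
      (Mmat x)ᵀ.mulVec a' + (Nmat x)ᵀ.mulVec b' = v →
      ∑ ij, (b ij) ^ 2 ≤ ∑ ij, (b' ij) ^ 2

/-- The operator 2-norm of a real matrix. -/
noncomputable def opNorm2 {ι κ : Type*} [Fintype ι] [Fintype κ] [DecidableEq κ]
    (M : Matrix ι κ ℝ) : ℝ :=
  ‖(Matrix.toEuclideanLin M).toContinuousLinearMap‖

namespace MFNAux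

variable {d p : ℕ}

/-- The Fréchet derivative of `modelFun a b` at `y`, as a continuous linear map. -/
def modelDeriv (a : Fin (d + 1) → ℝ) (b : QIdx d → ℝ) (y : EuclideanSpace ℝ (Fin d)) :
    EuclideanSpace ℝ (Fin d) →L[ℝ] ℝ :=
  (∑ j : Fin d, a j.succ • EuclideanSpace.proj j) +
    ∑ ij : QIdx d, b ij • ((y ij.1.1) • EuclideanSpace.proj ij.1.2 +
      (y ij.1.2) • EuclideanSpace.proj ij.1.1)

lemma modelFun_eq (a : Fin (d + 1) → ℝ) (b : QIdx d → ℝ) (y : EuclideanSpace ℝ (Fin d)) :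
    modelFun a b y = a 0 + ((∑ j : Fin d, a j.succ * y j) +
      ∑ ij : QIdx d, b ij * (y ij.1.1 * y ij.1.2)) := by
  simp only [modelFun, muVec, nuVec, Fin.sum_univ_succ, Fin.cons_zero, Fin.cons_succ, mul_one]
  ring

lemma modelDeriv_apply (a : Fin (d + 1) → ℝ) (b : QIdx d → ℝ)
    (y h : EuclideanSpace ℝ (Fin d)) :
    modelDeriv a b y h = (∑ j : Fin d, a j.succ * h j) +
      ∑ ij : QIdx d, b ij * (y ij.1.1 * h ij.1.2 + y ij.1.2 * h ij.1.1) := by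
  simp [modelDeriv, ContinuousLinearMap.sum_apply, mul_add]

lemma hasFDerivAt_modelFun (a : Fin (d + 1) → ℝ) (b : QIdx d → ℝ)
    (y : EuclideanSpace ℝ (Fin d)) :
    HasFDerivAt (modelFun a b) (modelDeriv a b y) y := by
  have h : HasFDerivAt (fun z : EuclideanSpace ℝ (Fin d) => a 0 +
      ((∑ j : Fin d, a j.succ * EuclideanSpace.proj (𝕜 := ℝ) j z) +
        ∑ ij : QIdx d, b ij * (EuclideanSpace.proj (𝕜 := ℝ) ij.1.1 z *
          EuclideanSpace.proj (𝕜 := ℝ) ij.1.2 z)))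
      ((∑ j : Fin d, a j.succ • EuclideanSpace.proj (𝕜 := ℝ) j) +
        ∑ ij : QIdx d, b ij • ((EuclideanSpace.proj (𝕜 := ℝ) ij.1.1 y) •
            EuclideanSpace.proj (𝕜 := ℝ) ij.1.2 +
          (EuclideanSpace.proj (𝕜 := ℝ) ij.1.2 y) • EuclideanSpace.proj (𝕜 := ℝ) ij.1.1)) y := by
    apply HasFDerivAt.const_add
    apply HasFDerivAt.add
    · exact HasFDerivAt.fun_sum fun j _ =>
        ((EuclideanSpace.proj (𝕜 := ℝ) j).hasFDerivAt (x := y)).const_mul (a j.succ)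
    · exact HasFDerivAt.fun_sum fun ij _ =>
        (((EuclideanSpace.proj (𝕜 := ℝ) ij.1.1).hasFDerivAt (x := y)).mul
          ((EuclideanSpace.proj (𝕜 := ℝ) ij.1.2).hasFDerivAt (x := y))).const_mul (b ij)
  have heq : (fun z : EuclideanSpace ℝ (Fin d) => a 0 +
      ((∑ j : Fin d, a j.succ * EuclideanSpace.proj (𝕜 := ℝ) j z) +
        ∑ ij : QIdx d, b ij * (EuclideanSpace.proj (𝕜 := ℝ) ij.1.1 z *
          EuclideanSpace.proj (𝕜 := ℝ) ij.1.2 z)))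
      = modelFun a b := by
    funext z; rw [modelFun_eq]; simp [PiLp.proj_apply]
  have heq2 : ((∑ j : Fin d, a j.succ • EuclideanSpace.proj (𝕜 := ℝ) j) +
        ∑ ij : QIdx d, b ij • ((EuclideanSpace.proj (𝕜 := ℝ) ij.1.1 y) •
            EuclideanSpace.proj (𝕜 := ℝ) ij.1.2 +
          (EuclideanSpace.proj (𝕜 := ℝ) ij.1.2 y) • EuclideanSpace.proj (𝕜 := ℝ) ij.1.1))
      = modelDeriv a b y := by
    rw [modelDeriv]; simp [PiLp.proj_apply]
  rwa [heq, heq2] at h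

lemma inner_gradient_modelFun (a : Fin (d + 1) → ℝ) (b : QIdx d → ℝ)
    (y h : EuclideanSpace ℝ (Fin d)) :
    ⟪gradient (modelFun a b) y, h⟫ = modelDeriv a b y h := by
  rw [gradient, InnerProductSpace.toDual_symm_apply, (hasFDerivAt_modelFun a b y).fderiv]

lemma modelFun_symm_diff (a : Fin (d + 1) → ℝ) (b : QIdx d → ℝ)
    (y h : EuclideanSpace ℝ (Fin d)) :
    modelFun a b (y + h) - modelFun a b (y - h) = 2 * modelDeriv a b y h := by
  rw [modelFun_eq, modelFun_eq, modelDeriv_apply]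
  have h1 : (∑ j : Fin d, a j.succ * (y + h) j) - (∑ j : Fin d, a j.succ * (y - h) j)
      = 2 * ∑ j : Fin d, a j.succ * h j := by
    rw [← Finset.sum_sub_distrib, Finset.mul_sum]
    apply Finset.sum_congr rfl
    intro j _
    simp only [PiLp.add_apply, PiLp.sub_apply]
    ring
  have h2 : (∑ ij : QIdx d, b ij * ((y + h) ij.1.1 * (y + h) ij.1.2)) -
      (∑ ij : QIdx d, b ij * ((y - h) ij.1.1 * (y - h) ij.1.2))
      = 2 * ∑ ij : QIdx d, b ij * (y ij.1.1 * h ij.1.2 + y ij.1.2 * h ij.1.1) := by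
    rw [← Finset.sum_sub_distrib, Finset.mul_sum]
    apply Finset.sum_congr rfl
    intro ij _
    simp only [PiLp.add_apply, PiLp.sub_apply]
    ring
  linarith [h1, h2]

/-- A gradient bound for quadratics bounded on a ball. -/
lemma grad_bound {a : Fin (d + 1) → ℝ} {b : QIdx d → ℝ} {θ : EuclideanSpace ℝ (Fin d)}
    {Λ R : ℝ} (hR : 0 < R)
    (hb : ∀ y ∈ Metric.closedBall θ R, |modelFun a b y| ≤ Λ) :
    ‖gradient (modelFun a b) θ‖ ≤ Λ / R := by
  set g := gradient (modelFun a b) θ with hg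
  have key : ∀ h : EuclideanSpace ℝ (Fin d), ‖h‖ ≤ R → ⟪g, h⟫ ≤ Λ := by
    intro h hh
    have h1 : θ + h ∈ Metric.closedBall θ R := by
      rw [Metric.mem_closedBall, dist_eq_norm]; simpa using hh
    have h2 : θ - h ∈ Metric.closedBall θ R := by
      rw [Metric.mem_closedBall, dist_eq_norm]; simpa using hh
    have e1 := abs_le.mp (hb _ h1)
    have e2 := abs_le.mp (hb _ h2)
    have := modelFun_symm_diff a b θ h
    have hip : ⟪g, h⟫ = modelDeriv a b θ h := inner_gradient_modelFun a b θ h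
    rw [hip]
    linarith
  by_cases hg0 : g = 0
  · rw [hg0, norm_zero]
    have hΛ0 : 0 ≤ Λ := by
      have := hb θ (Metric.mem_closedBall_self hR.le)
      exact le_trans (abs_nonneg _) this
    positivity
  · have hng : 0 < ‖g‖ := norm_pos_iff.mpr hg0
    have := key ((R / ‖g‖) • g) (by
      rw [norm_smul, Real.norm_eq_abs, abs_div, abs_of_pos hR, abs_of_pos hng]
      field_simp; exact le_rfl)
    rw [real_inner_smul_right, real_inner_self_eq_norm_sq] at this
    rw [div_mul_eq_mul_div, div_le_iff₀ hng] at this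
    have : ‖g‖ * R ≤ Λ := by nlinarith
    rw [le_div_iff₀ hR]
    linarith

lemma sum_sq_expand (b b'' : QIdx d → ℝ) (t : ℝ) :
    ∑ ij : QIdx d, ((b + t • b'') ij) ^ 2 =
      (∑ ij : QIdx d, (b ij) ^ 2) + 2 * t * (∑ ij : QIdx d, b ij * b'' ij) +
        t ^ 2 * (∑ ij : QIdx d, (b'' ij) ^ 2) := by
  rw [Finset.mul_sum, Finset.mul_sum, ← Finset.sum_add_distrib, ← Finset.sum_add_distrib]
  exact Finset.sum_congr rfl fun ij _ => by
    simp only [Pi.add_apply, Pi.smul_apply, smul_eq_mul]; ring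

section MFN

variable (x : Fin (p + 1) → EuclideanSpace ℝ (Fin d))

lemma mfn_orth {v : Fin (p + 1) → ℝ} {a : Fin (d + 1) → ℝ} {b : QIdx d → ℝ}
    (hsol : IsMFNSol x v a b) {a'' : Fin (d + 1) → ℝ} {b'' : QIdx d → ℝ}
    (h0 : (Mmat x)ᵀ.mulVec a'' + (Nmat x)ᵀ.mulVec b'' = 0) :
    ∑ ij : QIdx d, b ij * b'' ij = 0 := by
  by_contra hs
  have hb''ne : ∃ ij, b'' ij ≠ 0 := by
    by_contra hall
    push_neg at hall
    exact hs (Finset.sum_eq_zero fun ij _ => by rw [hall ij, mul_zero])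
  have hn : 0 < ∑ ij : QIdx d, (b'' ij) ^ 2 := by
    obtain ⟨ij, hij⟩ := hb''ne
    have h1 : 0 < (b'' ij) ^ 2 := by positivity
    exact lt_of_lt_of_le h1
      (Finset.single_le_sum (fun k _ => sq_nonneg (b'' k)) (Finset.mem_univ ij))
  set t : ℝ := -(∑ ij : QIdx d, b ij * b'' ij) / (∑ ij : QIdx d, (b'' ij) ^ 2) with htdef
  have hfeas : (Mmat x)ᵀ.mulVec (a + t • a'') + (Nmat x)ᵀ.mulVec (b + t • b'') = v := by
    rw [Matrix.mulVec_add, Matrix.mulVec_add, Matrix.mulVec_smul, Matrix.mulVec_smul]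
    have hv : (Mmat x)ᵀ.mulVec a + (Nmat x)ᵀ.mulVec b = v := hsol.1
    rw [show (Mmat x)ᵀ.mulVec a + t • (Mmat x)ᵀ.mulVec a'' +
        ((Nmat x)ᵀ.mulVec b + t • (Nmat x)ᵀ.mulVec b'') =
        ((Mmat x)ᵀ.mulVec a + (Nmat x)ᵀ.mulVec b) +
        t • ((Mmat x)ᵀ.mulVec a'' + (Nmat x)ᵀ.mulVec b'') by module]
    rw [hv, h0, smul_zero, add_zero]
  have hmin := hsol.2 (a + t • a'') (b + t • b'') hfeas
  rw [sum_sq_expand] at hmin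
  set s : ℝ := ∑ ij : QIdx d, b ij * b'' ij with hsdef
  set n : ℝ := ∑ ij : QIdx d, (b'' ij) ^ 2 with hndef
  have ht : 2 * t * s + t ^ 2 * n = -(s ^ 2 / n) := by
    rw [htdef]; field_simp; ring
  have hpos : 0 < s ^ 2 / n := by positivity
  linarith

lemma mfn_of_orth {v : Fin (p + 1) → ℝ} {a : Fin (d + 1) → ℝ} {b : QIdx d → ℝ}
    (hc : (Mmat x)ᵀ.mulVec a + (Nmat x)ᵀ.mulVec b = v)
    (horth : ∀ (a'' : Fin (d + 1) → ℝ) (b'' : QIdx d → ℝ),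
      (Mmat x)ᵀ.mulVec a'' + (Nmat x)ᵀ.mulVec b'' = 0 →
      ∑ ij : QIdx d, b ij * b'' ij = 0) :
    IsMFNSol x v a b := by
  refine ⟨hc, fun a' b' hc' => ?_⟩
  have h0 : (Mmat x)ᵀ.mulVec (a' - a) + (Nmat x)ᵀ.mulVec (b' - b) = 0 := by
    rw [Matrix.mulVec_sub, Matrix.mulVec_sub]
    rw [show (Mmat x)ᵀ.mulVec a' - (Mmat x)ᵀ.mulVec a +
        ((Nmat x)ᵀ.mulVec b' - (Nmat x)ᵀ.mulVec b) =
        ((Mmat x)ᵀ.mulVec a' + (Nmat x)ᵀ.mulVec b') -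
        ((Mmat x)ᵀ.mulVec a + (Nmat x)ᵀ.mulVec b) by module]
    rw [hc, hc', sub_self]
  have hz := horth (a' - a) (b' - b) h0
  have hexp : ∑ ij : QIdx d, (b' ij) ^ 2 =
      (∑ ij : QIdx d, (b ij) ^ 2) + 2 * (∑ ij : QIdx d, b ij * (b' - b) ij) +
        ∑ ij : QIdx d, ((b' - b) ij) ^ 2 := by
    rw [Finset.mul_sum, ← Finset.sum_add_distrib, ← Finset.sum_add_distrib]
    apply Finset.sum_congr rfl
    intro ij _
    simp only [Pi.sub_apply]
    ring
  rw [hexp, hz]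
  have : 0 ≤ ∑ ij : QIdx d, ((b' - b) ij) ^ 2 :=
    Finset.sum_nonneg fun ij _ => sq_nonneg _
  linarith

lemma mfn_unique (hpoised : MFNPoised x) {v : Fin (p + 1) → ℝ}
    {a a' : Fin (d + 1) → ℝ} {b b' : QIdx d → ℝ}
    (h1 : IsMFNSol x v a b) (h2 : IsMFNSol x v a' b') : a = a' ∧ b = b' := by
  have h0 : (Mmat x)ᵀ.mulVec (a - a') + (Nmat x)ᵀ.mulVec (b - b') = 0 := by
    rw [Matrix.mulVec_sub, Matrix.mulVec_sub]
    rw [show (Mmat x)ᵀ.mulVec a - (Mmat x)ᵀ.mulVec a' +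
        ((Nmat x)ᵀ.mulVec b - (Nmat x)ᵀ.mulVec b') =
        ((Mmat x)ᵀ.mulVec a + (Nmat x)ᵀ.mulVec b) -
        ((Mmat x)ᵀ.mulVec a' + (Nmat x)ᵀ.mulVec b') by module]
    rw [h1.1, h2.1, sub_self]
  have o1 := mfn_orth x h1 h0
  have o2 := mfn_orth x h2 h0
  have hbb : b = b' := by
    have hsum : ∑ ij : QIdx d, ((b - b') ij) ^ 2 = 0 := by
      have : ∑ ij : QIdx d, ((b - b') ij) ^ 2 =
          (∑ ij : QIdx d, b ij * (b - b') ij) - ∑ ij : QIdx d, b' ij * (b - b') ij := by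
        rw [← Finset.sum_sub_distrib]
        apply Finset.sum_congr rfl
        intro ij _
        simp only [Pi.sub_apply]
        ring
      rw [this, o1, o2, sub_zero]
    funext ij
    have hz2 := (Finset.sum_eq_zero_iff_of_nonneg (fun k _ => sq_nonneg ((b - b') k))).mp
      hsum ij (Finset.mem_univ ij)
    have : b ij - b' ij = 0 := by
      have := sq_eq_zero_iff.mp hz2
      simpa [Pi.sub_apply] using this
    linarith [this]
  have hMa : (Mmat x)ᵀ.mulVec (a - a') = 0 := by
    rw [hbb] at h0
    simpa using h0
  have haa : a = a' := by
    set z : Fin (p + 1) ⊕ Fin (d + 1) → ℝ := Sum.elim 0 (a - a') with hz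
    have hWz : (Wmat x).mulVec z = 0 := by
      rw [hz, Wmat, Matrix.fromBlocks_mulVec]
      have hl : (Sum.elim (0 : Fin (p+1) → ℝ) (a - a')) ∘ Sum.inl = 0 := rfl
      have hr : (Sum.elim (0 : Fin (p+1) → ℝ) (a - a')) ∘ Sum.inr = a - a' := rfl
      rw [hl, hr, Matrix.mulVec_zero, Matrix.mulVec_zero, hMa]
      simp
    have hzz : z = 0 := by
      have h1' : (Wmat x)⁻¹ * (Wmat x) = 1 := Matrix.nonsing_inv_mul _ hpoised
      calc z = Matrix.mulVec 1 z := by rw [Matrix.one_mulVec]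
        _ = ((Wmat x)⁻¹ * (Wmat x)).mulVec z := by rw [h1']
        _ = (Wmat x)⁻¹.mulVec ((Wmat x).mulVec z) := by rw [← Matrix.mulVec_mulVec]
        _ = 0 := by rw [hWz, Matrix.mulVec_zero]
    funext k
    have := congrFun hzz (Sum.inr k)
    simp only [hz, Sum.elim_inr, Pi.sub_apply, Pi.zero_apply] at this
    linarith
  exact ⟨haa, hbb⟩

end MFN

lemma mulVec_sum {m n ι : Type*} [Fintype n] [Fintype ι] (A : Matrix m n ℝ)
    (v : ι → n → ℝ) : A.mulVec (∑ i, v i) = ∑ i, A.mulVec (v i) := by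
  rw [← Matrix.mulVecLin_apply, map_sum]
  simp [Matrix.mulVecLin_apply]

lemma sum_swap_mul {κ : Type*} [Fintype κ] {q : ℕ} (c : Fin q → ℝ) (u : Fin q → κ → ℝ)
    (v : κ → ℝ) :
    ∑ k : κ, (∑ i, c i * u i k) * v k = ∑ i, c i * ∑ k : κ, u i k * v k := by
  simp only [Finset.sum_mul, Finset.mul_sum]
  rw [Finset.sum_comm]
  exact Finset.sum_congr rfl fun i _ => Finset.sum_congr rfl fun k _ => by ring

lemma modelDeriv_combo (aq : Fin (d + 1) → ℝ) {q : ℕ} (c : Fin q → ℝ)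
    (la : Fin q → Fin (d + 1) → ℝ) (lb : Fin q → QIdx d → ℝ)
    (y h : EuclideanSpace ℝ (Fin d)) :
    modelDeriv (fun k => aq k + ∑ i, c i * la i k) (fun ij => ∑ i, c i * lb i ij) y h
      = modelDeriv aq 0 y h + ∑ i, c i * modelDeriv (la i) (lb i) y h := by
  simp only [modelDeriv_apply, Pi.zero_apply, zero_mul, Finset.sum_const_zero, add_zero]
  have h1 : ∑ j : Fin d, (aq j.succ + ∑ i, c i * la i j.succ) * h j =
      (∑ j : Fin d, aq j.succ * h j) + ∑ j : Fin d, (∑ i, c i * la i j.succ) * h j := by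
    rw [← Finset.sum_add_distrib]
    exact Finset.sum_congr rfl fun j _ => by ring
  have h2 : ∑ i, c i * ((∑ j : Fin d, la i j.succ * h j) +
      ∑ ij : QIdx d, lb i ij * (y ij.1.1 * h ij.1.2 + y ij.1.2 * h ij.1.1)) =
      (∑ i, c i * ∑ j : Fin d, la i j.succ * h j) +
        ∑ i, c i * ∑ ij : QIdx d, lb i ij * (y ij.1.1 * h ij.1.2 + y ij.1.2 * h ij.1.1) := by
    rw [← Finset.sum_add_distrib]
    exact Finset.sum_congr rfl fun i _ => by ring
  rw [h1, h2, sum_swap_mul c (fun i j => la i j.succ) h,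
    sum_swap_mul c (fun i ij => lb i ij) (fun ij => y ij.1.1 * h ij.1.2 + y ij.1.2 * h ij.1.1)]
  ring

lemma taylor_bound {d : ℕ} (f : EuclideanSpace ℝ (Fin d) → ℝ) (hf : ContDiff ℝ 1 f)
    (L : ℝ) (hL : 0 < L)
    (hlip : ∀ u v : EuclideanSpace ℝ (Fin d),
      ‖gradient f u - gradient f v‖ ≤ L * ‖u - v‖)
    (θ u : EuclideanSpace ℝ (Fin d)) :
    |f u - f θ - ⟪gradient f θ, u - θ⟫| ≤ L * ‖u - θ‖ ^ 2 := by
  have hdiff : ∀ y, DifferentiableAt ℝ f y := fun y => hf.differentiable one_ne_zero y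
  set D := InnerProductSpace.toDual ℝ (EuclideanSpace ℝ (Fin d)) with hD
  set gθ := gradient f θ with hgθ
  have hfd : ∀ y, fderiv ℝ f y = D (gradient f y) := by
    intro y
    rw [gradient]
    exact (D.apply_symm_apply _).symm
  set φ : EuclideanSpace ℝ (Fin d) → ℝ := fun y => f y - D gθ y with hφ
  have hφd : ∀ y, HasFDerivAt φ (fderiv ℝ f y - D gθ) y := fun y =>
    ((hdiff y).hasFDerivAt).sub ((D gθ).hasFDerivAt)
  have hθs : θ ∈ Metric.closedBall θ ‖u - θ‖ := Metric.mem_closedBall_self (norm_nonneg _)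
  have hus : u ∈ Metric.closedBall θ ‖u - θ‖ := by
    simp [Metric.mem_closedBall, dist_eq_norm]
  have hbound : ∀ y ∈ Metric.closedBall θ ‖u - θ‖, ‖fderiv ℝ φ y‖ ≤ L * ‖u - θ‖ := by
    intro y hy
    rw [(hφd y).fderiv, hfd y, ← map_sub, LinearIsometryEquiv.norm_map]
    have h1 : ‖gradient f y - gθ‖ ≤ L * ‖y - θ‖ := hlip y θ
    have h2 : ‖y - θ‖ ≤ ‖u - θ‖ := by
      have := Metric.mem_closedBall.mp hy
      rwa [dist_eq_norm] at this
    nlinarith [norm_nonneg (y - θ)]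
  have hmv := Convex.norm_image_sub_le_of_norm_fderiv_le
    (fun y _ => (hφd y).differentiableAt) hbound (convex_closedBall θ _) hθs hus
  have hφval : φ u - φ θ = f u - f θ - ⟪gθ, u - θ⟫ := by
    simp only [hφ]
    rw [hD, InnerProductSpace.toDual_apply_apply, InnerProductSpace.toDual_apply_apply, inner_sub_right]
    ring
  rw [hφval, Real.norm_eq_abs] at hmv
  calc |f u - f θ - ⟪gθ, u - θ⟫| ≤ L * ‖u - θ‖ * ‖u - θ‖ := hmv
    _ = L * ‖u - θ‖ ^ 2 := by ring

end MFNAux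

set_option maxHeartbeats 1000000 in
/-- Under deterministically bounded noise of level `ε_f`, the gradient of
the minimum Frobenius norm interpolation model built on a `Λ̄`-poised set over the decoupled
sampling radius `Δ̄ = max{Δ, √(r ε_f / L)}` is a deterministic first-order oracle:
`‖∇f(θ) − g‖ ≤ ε_g + κ_eg Δ` with the stated constants. -/
theorem mfn_model_gradient_is_first_order_oracle
    {d p : ℕ} (hd : 1 ≤ d) (hdp : d ≤ p) (hcard : p + 1 ≤ (d + 1) * (d + 2) / 2)
    (f : EuclideanSpace ℝ (Fin d) → ℝ)
    (hf : ContDiff ℝ 1 f)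
    (L : ℝ) (hL : 0 < L)
    (hlip : ∀ u v : EuclideanSpace ℝ (Fin d),
      ‖gradient f u - gradient f v‖ ≤ L * ‖u - v‖)
    (εf r Δmax Δ : ℝ)
    (hεf : 0 ≤ εf) (hr : 2 ≤ r) (hLrεf : r * εf ≤ L)
    (hΔmax : 0 < Δmax) (hΔ : 0 < Δ) (hΔle : Δ ≤ Δmax)
    (θ : EuclideanSpace ℝ (Fin d))
    (Δbar : ℝ) (hΔbar : Δbar = max Δ (Real.sqrt (r * εf / L)))
    (x : Fin (p + 1) → EuclideanSpace ℝ (Fin d))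
    (hx0 : x 0 = θ)
    (hxinj : Function.Injective x)
    (hx : ∀ i, x i ∈ Metric.closedBall θ Δbar)
    (hpoised : MFNPoised x)
    (Λ : ℝ) (hΛ : 0 < Λ)
    (la : Fin (p + 1) → Fin (d + 1) → ℝ) (lb : Fin (p + 1) → QIdx d → ℝ)
    (hlagrange : ∀ i, IsMFNSol x (Pi.single i 1) (la i) (lb i))
    (hlampoised : ∀ i, ∀ y ∈ Metric.closedBall θ Δbar, |modelFun (la i) (lb i) y| ≤ Λ)
    (ft : Fin (p + 1) → ℝ)
    (hft : ∀ i, |ft i - f (x i)| ≤ εf)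
    (a : Fin (d + 1) → ℝ) (b : QIdx d → ℝ)
    (hmodel : IsMFNSol x ft a b)
    (A B κeg εg : ℝ)
    (hAdef : A = 4 * (p + 1) * Λ * L * Real.sqrt ((d + 1) * (d + 2)))
    (hBdef : B = 8 * (p + 1) * Λ * Real.sqrt ((d + 1) * (d + 2)))
    (hκeg : κeg = (p + 1) * Λ * (L + max A (B * εf)))
    (hεg : εg = (p + 1) * Λ *
      max ((L + A) * Real.sqrt (r * εf / L) + (B + 2) * Real.sqrt (L * εf / r))
          (A * Δmax ^ 3 + 2 * Real.sqrt (L * εf / r))) :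
    ‖gradient f θ - gradient (modelFun a b) θ‖ ≤ εg + κeg * Δ := by
  classical
  open MFNAux in
  -- basic positivity facts
  have hΔbar0 : 0 < Δbar := by
    rw [hΔbar]; exact lt_of_lt_of_le hΔ (le_max_left _ _)
  have hr0 : (0:ℝ) < r := lt_of_lt_of_le (by norm_num) hr
  have hs0 : (0:ℝ) ≤ Real.sqrt (r * εf / L) := Real.sqrt_nonneg _
  have ht0 : (0:ℝ) ≤ Real.sqrt (L * εf / r) := Real.sqrt_nonneg _
  set gθ := gradient f θ with hgθdef
  -- linear model coefficients for the first-order Taylor polynomial of f at θ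
  set aq : Fin (d + 1) → ℝ :=
    Fin.cons (f θ - ∑ j : Fin d, gθ j * θ j) (fun j => gθ j) with haq
  have hq_inner : ∀ u : EuclideanSpace ℝ (Fin d),
      modelFun aq 0 u = f θ + ⟪gθ, u - θ⟫ := by
    intro u
    rw [MFNAux.modelFun_eq]
    simp only [haq, Fin.cons_zero, Fin.cons_succ, Pi.zero_apply, zero_mul,
      Finset.sum_const_zero, add_zero, PiLp.inner_apply, RCLike.inner_apply, conj_trivial,
      PiLp.sub_apply, mul_sub, Finset.sum_sub_distrib]
    simp only [sub_mul, Finset.sum_sub_distrib]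
    simp only [mul_comm (gθ.ofLp _)]
    ring
  have hq_deriv : ∀ h : EuclideanSpace ℝ (Fin d),
      MFNAux.modelDeriv aq 0 θ h = ⟪gθ, h⟫ := by
    intro h
    rw [MFNAux.modelDeriv_apply]
    simp only [haq, Fin.cons_succ, Pi.zero_apply, zero_mul, Finset.sum_const_zero, add_zero,
      PiLp.inner_apply, RCLike.inner_apply, conj_trivial]
    exact Finset.sum_congr rfl fun _ _ => mul_comm _ _
  -- the residual data
  set c : Fin (p + 1) → ℝ := fun i => ft i - modelFun aq 0 (x i) with hc
  set astar : Fin (d + 1) → ℝ := fun k => aq k + ∑ i, c i * la i k with hastar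
  set bstar : QIdx d → ℝ := fun ij => ∑ i, c i * lb i ij with hbstar
  -- M^T aq is q evaluated at the sample points
  have hMaq : (Mmat x)ᵀ.mulVec aq = fun j => modelFun aq 0 (x j) := by
    funext j
    simp [Matrix.mulVec, dotProduct, Mmat, modelFun, Matrix.transpose_apply,
      mul_comm, Pi.zero_apply]
  -- (astar, bstar) satisfies the interpolation constraints for data ft
  have hastar_eq : astar = aq + ∑ i, c i • la i := by
    funext k; simp [hastar, Finset.sum_apply]
  have hbstar_eq : bstar = ∑ i, c i • lb i := by
    funext ij; simp [hbstar, Finset.sum_apply]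
  have hsingle : (∑ i, c i • (Pi.single i 1 : Fin (p + 1) → ℝ)) = c := by
    funext j
    simp [Finset.sum_apply, Pi.single_apply]
  have hconstr : (Mmat x)ᵀ.mulVec astar + (Nmat x)ᵀ.mulVec bstar = ft := by
    rw [hastar_eq, hbstar_eq, Matrix.mulVec_add, MFNAux.mulVec_sum, MFNAux.mulVec_sum]
    simp only [Matrix.mulVec_smul]
    rw [add_assoc, ← Finset.sum_add_distrib]
    have hterm : ∀ i ∈ Finset.univ, c i • ((Mmat x)ᵀ.mulVec (la i)) +
        c i • ((Nmat x)ᵀ.mulVec (lb i)) = c i • (Pi.single i 1 : Fin (p + 1) → ℝ) := fun i _ => by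
      rw [← smul_add, (hlagrange i).1]
    rw [Finset.sum_congr rfl hterm, hsingle, hMaq]
    funext j
    simp only [Pi.add_apply, hc]
    ring
  -- (astar, bstar) is the MFN solution for data ft
  have hstar : IsMFNSol x ft astar bstar := by
    apply MFNAux.mfn_of_orth x hconstr
    intro a'' b'' h0
    have hswap : ∑ ij : QIdx d, bstar ij * b'' ij =
        ∑ i, c i * ∑ ij : QIdx d, lb i ij * b'' ij := by
      rw [hbstar]
      exact MFNAux.sum_swap_mul c (fun i ij => lb i ij) b''
    rw [hswap]
    exact Finset.sum_eq_zero fun i _ => by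
      rw [MFNAux.mfn_orth x (hlagrange i) h0, mul_zero]
  obtain ⟨haa, hbb⟩ := MFNAux.mfn_unique x hpoised hmodel hstar
  -- the gradient decomposition
  have hkey : gradient (modelFun a b) θ =
      gθ + ∑ i, c i • gradient (modelFun (la i) (lb i)) θ := by
    apply ext_inner_right ℝ
    intro v
    rw [MFNAux.inner_gradient_modelFun, haa, hbb, hastar, hbstar,
      MFNAux.modelDeriv_combo aq c la lb θ v, hq_deriv v]
    rw [inner_add_left, sum_inner]
    congr 1
    exact Finset.sum_congr rfl fun i _ => by
      rw [real_inner_smul_left, MFNAux.inner_gradient_modelFun]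
  have hdiffvec : gθ - gradient (modelFun a b) θ =
      -∑ i, c i • gradient (modelFun (la i) (lb i)) θ := by
    rw [hkey]; abel
  -- per-term bounds
  have hcbound : ∀ i, |c i| ≤ εf + L * Δbar ^ 2 := by
    intro i
    have hnorm : ‖x i - θ‖ ≤ Δbar := by
      have := Metric.mem_closedBall.mp (hx i)
      rwa [dist_eq_norm] at this
    have htay := MFNAux.taylor_bound f hf L hL hlip θ (x i)
    have hft' := hft i
    have hcii : c i = (ft i - f (x i)) + (f (x i) - f θ - ⟪gθ, x i - θ⟫) := by
      rw [hc]
      simp only [hq_inner (x i)]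
      ring
    have habs : |c i| ≤ |ft i - f (x i)| + |f (x i) - f θ - ⟪gθ, x i - θ⟫| := by
      rw [hcii]; exact abs_add_le _ _
    have hsq : ‖x i - θ‖ ^ 2 ≤ Δbar ^ 2 := pow_le_pow_left₀ (norm_nonneg _) hnorm 2
    have hmul : L * ‖x i - θ‖ ^ 2 ≤ L * Δbar ^ 2 := mul_le_mul_of_nonneg_left hsq hL.le
    linarith
  have hgibound : ∀ i, ‖gradient (modelFun (la i) (lb i)) θ‖ ≤ Λ / Δbar := fun i =>
    MFNAux.grad_bound hΔbar0 (hlampoised i)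
  -- the main norm estimate
  have hnormle : ‖gθ - gradient (modelFun a b) θ‖ ≤
      ((p:ℝ) + 1) * ((εf + L * Δbar ^ 2) * (Λ / Δbar)) := by
    rw [hdiffvec, norm_neg]
    calc ‖∑ i, c i • gradient (modelFun (la i) (lb i)) θ‖
        ≤ ∑ i, ‖c i • gradient (modelFun (la i) (lb i)) θ‖ := norm_sum_le _ _
      _ ≤ ∑ _i : Fin (p + 1), (εf + L * Δbar ^ 2) * (Λ / Δbar) := by
          apply Finset.sum_le_sum
          intro i _
          rw [norm_smul, Real.norm_eq_abs]
          have h1 := hcbound i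
          have h2 := hgibound i
          exact mul_le_mul h1 h2 (norm_nonneg _)
            (add_nonneg hεf (by positivity))
      _ = ((p:ℝ) + 1) * ((εf + L * Δbar ^ 2) * (Λ / Δbar)) := by
          rw [Finset.sum_const, Finset.card_univ, Fintype.card_fin, nsmul_eq_mul]
          push_cast
          ring
  -- arithmetic: compare with εg + κeg Δ
  set s := Real.sqrt (r * εf / L) with hsdef
  set t := Real.sqrt (L * εf / r) with htdef
  have hΔbar_le : Δbar ≤ Δ + s := by
    rw [hΔbar]
    exact max_le (by linarith) (by linarith)
  have hsbar : s ≤ Δbar := by rw [hΔbar]; exact le_max_right _ _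
  have hεfdiv : εf / Δbar ≤ t := by
    rcases eq_or_lt_of_le hεf with h0 | h0
    · rw [← h0]
      simpa using ht0
    · have hspos : 0 < s := by
        rw [hsdef]
        apply Real.sqrt_pos.mpr
        positivity
      have hprod : s * t = εf := by
        rw [hsdef, htdef, ← Real.sqrt_mul (by positivity),
          show (r * εf / L) * (L * εf / r) = εf ^ 2 by field_simp,
          Real.sqrt_sq hεf]
      calc εf / Δbar ≤ εf / s := by
            apply div_le_div_of_nonneg_left h0.le hspos hsbar
        _ = t := by
            rw [div_eq_iff hspos.ne']
            linarith [hprod]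
  have hA0 : 0 ≤ A := by rw [hAdef]; positivity
  have hB0 : 0 ≤ B := by rw [hBdef]; positivity
  set P := ((p:ℝ) + 1) * Λ with hP
  have hP0 : 0 ≤ P := by rw [hP]; positivity
  have hεg_ge : P * (L * s + t) ≤ εg := by
    have hX : L * s + t ≤ (L + A) * s + (B + 2) * t := by nlinarith
    have hmax : (L + A) * s + (B + 2) * t ≤
        max ((L + A) * s + (B + 2) * t) (A * Δmax ^ 3 + 2 * t) := le_max_left _ _
    calc P * (L * s + t) ≤ P * ((L + A) * s + (B + 2) * t) :=
          mul_le_mul_of_nonneg_left hX hP0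
      _ ≤ P * max ((L + A) * s + (B + 2) * t) (A * Δmax ^ 3 + 2 * t) :=
          mul_le_mul_of_nonneg_left hmax hP0
      _ = εg := by rw [hεg]
  have hκeg_ge : P * L * Δ ≤ κeg * Δ := by
    have hmax0 : 0 ≤ max A (B * εf) := le_trans hA0 (le_max_left _ _)
    have h1 : P * L ≤ κeg := by
      have h2 : P * L ≤ P * (L + max A (B * εf)) :=
        mul_le_mul_of_nonneg_left (by linarith) hP0
      have h3 : κeg = P * (L + max A (B * εf)) := by rw [hκeg, hP]
      rw [h3]
      exact h2
    exact mul_le_mul_of_nonneg_right h1 hΔ.le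
  have hsplit : ((p:ℝ) + 1) * ((εf + L * Δbar ^ 2) * (Λ / Δbar)) =
      P * (εf / Δbar + L * Δbar) := by
    rw [hP]
    field_simp
  have hfinal : ((p:ℝ) + 1) * ((εf + L * Δbar ^ 2) * (Λ / Δbar)) ≤ εg + κeg * Δ := by
    rw [hsplit]
    have hinner : εf / Δbar + L * Δbar ≤ t + L * (Δ + s) := by
      have := mul_le_mul_of_nonneg_left hΔbar_le hL.le
      linarith
    calc P * (εf / Δbar + L * Δbar) ≤ P * (t + L * (Δ + s)) :=
          mul_le_mul_of_nonneg_left hinner hP0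
      _ = P * (L * s + t) + P * L * Δ := by ring
      _ ≤ εg + κeg * Δ := add_le_add hεg_ge hκeg_ge
  exact le_trans hnormle hfinal

end
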